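/- arXiv:0906.1761 — 2 statements merged into one kernel-verified Lean document; each statement's English description precedes it below -/
import Mathlib

section
/- Let e_1,…,e_p ∈ ℂᵐ and f_1,…,f_p ∈ ℂⁿ be unit vectors with f_1,…,f_p linearly independent and the lines ℂe_1,…,ℂe_p pairwise distinct. Then the face of S generated by {ω_{e_i⊗f_i} : 1 ≤ i ≤ p} equals the convex hull of {ω_{e_i⊗f_i} : 1 ≤ i ≤ p}, and this face is a simplex. -/
open scoped Kronecker ComplexOrder

noncomputable section

/-- The vector state (rank-one projection onto `ℂx`) associated to a unit vector `x`. -/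
def vecState {ι : Type*} [Fintype ι] (x : EuclideanSpace ℂ ι) : Matrix ι ι ℂ :=
  Matrix.of fun i j => x i * (starRingEnd ℂ) (x j)

/-- The (Kronecker) tensor product of two vectors. -/
def tensorVec {m n : ℕ} (x : EuclideanSpace ℂ (Fin m)) (y : EuclideanSpace ℂ (Fin n)) :
    EuclideanSpace ℂ (Fin m × Fin n) :=
  WithLp.toLp 2 (fun p => x p.1 * y p.2)

/-- The state space of `B(ℂ^ι)`: density matrices. -/
def stateSet (ι : Type*) [Fintype ι] [DecidableEq ι] : Set (Matrix ι ι ℂ) :=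
  {ρ | ρ.PosSemidef ∧ ρ.trace = 1}

/-- The set of separable states on `B(ℂᵐ ⊗ ℂⁿ)`: convex combinations of pure product states. -/
def sepSet (m n : ℕ) : Set (Matrix (Fin m × Fin n) (Fin m × Fin n) ℂ) :=
  {ρ | ∃ (r : ℕ) (lam : Fin r → ℝ) (x : Fin r → EuclideanSpace ℂ (Fin m))
        (y : Fin r → EuclideanSpace ℂ (Fin n)),
      (∀ i, 0 ≤ lam i) ∧ (∑ i, lam i) = 1 ∧ (∀ i, ‖x i‖ = 1) ∧ (∀ i, ‖y i‖ = 1) ∧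
      ρ = ∑ i, lam i • vecState (tensorVec (x i) (y i))}

/-- `F` is a face of the convex set `C`. -/
def IsFace {E : Type*} [AddCommGroup E] [Module ℝ E] (C F : Set E) : Prop :=
  F ⊆ C ∧ Convex ℝ F ∧
    ∀ ⦃x⦄, x ∈ C → ∀ ⦃y⦄, y ∈ C → ∀ ⦃z⦄, z ∈ openSegment ℝ x y → z ∈ F → x ∈ F ∧ y ∈ F

/-- The smallest face of `C` containing `X`. -/
def faceGen {E : Type*} [AddCommGroup E] [Module ℝ E] (C X : Set E) : Set E :=
  ⋂₀ {F | IsFace C F ∧ X ⊆ F}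

/-- `C` is the direct convex sum of the convex sets `F 1, …, F q`. -/
def IsDirectConvexSum {E : Type*} [AddCommGroup E] [Module ℝ E] {q : ℕ}
    (C : Set E) (F : Fin q → Set E) : Prop :=
  (∀ x ∈ C, ∃ (lam : Fin q → ℝ) (pt : Fin q → E),
      (∀ i, 0 ≤ lam i) ∧ (∑ i, lam i) = 1 ∧ (∀ i, lam i ≠ 0 → pt i ∈ F i) ∧
      x = ∑ i, lam i • pt i) ∧
  (∀ (lam lam' : Fin q → ℝ) (pt pt' : Fin q → E),
      (∀ i, 0 ≤ lam i) → (∑ i, lam i) = 1 → (∀ i, lam i ≠ 0 → pt i ∈ F i) →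
      (∀ i, 0 ≤ lam' i) → (∑ i, lam' i) = 1 → (∀ i, lam' i ≠ 0 → pt' i ∈ F i) →
      (∑ i, lam i • pt i) = (∑ i, lam' i • pt' i) →
      ∀ i, lam i = lam' i ∧ (lam i ≠ 0 → pt i = pt' i))

/-- A (finite-dimensional) convex set is a simplex: every point has a unique
representation as a convex combination of its extreme points. -/
def IsSimplex {E : Type*} [AddCommGroup E] [Module ℝ E] (C : Set E) : Prop :=
  ∀ x ∈ C, ∃! w : E →₀ ℝ,
    ↑w.support ⊆ Set.extremePoints ℝ C ∧ (∀ y, 0 ≤ w y) ∧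
    (w.sum fun _ a => a) = 1 ∧ (w.sum fun y a => a • y) = x

/-- Two convex sets (possibly in different ambient spaces) are affinely isomorphic. -/
def AffIsomorphic {E F' : Type*} [AddCommGroup E] [Module ℝ E] [AddCommGroup F'] [Module ℝ F']
    (A : Set E) (B : Set F') : Prop :=
  ∃ φ : E → F', Set.BijOn φ A B ∧
    ∀ x ∈ A, ∀ y ∈ A, ∀ t : ℝ, 0 ≤ t → t ≤ 1 →
      φ (t • x + (1 - t) • y) = t • φ x + (1 - t) • φ y

namespace FaceSimplexAux
open Finset

lemma euc_sum_apply {ι κ : Type*} (s : Finset κ) (g : κ → EuclideanSpace ℂ ι) (a : ι) :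
    (∑ i ∈ s, g i) a = ∑ i ∈ s, g i a := by
  rw [WithLp.ofLp_sum, Finset.sum_apply]

lemma norm_tensorVec {m n : ℕ} (x : EuclideanSpace ℂ (Fin m)) (y : EuclideanSpace ℂ (Fin n)) :
    ‖tensorVec x y‖ = ‖x‖ * ‖y‖ := by
  rw [EuclideanSpace.norm_eq, EuclideanSpace.norm_eq x, EuclideanSpace.norm_eq y,
    ← Real.sqrt_mul (by positivity)]
  congr 1
  rw [Finset.sum_mul_sum, Fintype.sum_prod_type]
  exact Finset.sum_congr rfl fun a _ => Finset.sum_congr rfl fun b _ => by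
    simp [tensorVec, norm_mul, mul_pow]

lemma exists_ne_zero_coord {ι : Type*} [Fintype ι] {x : EuclideanSpace ℂ ι} (hx : x ≠ 0) :
    ∃ a, x a ≠ 0 := by
  by_contra h; push_neg at h; exact hx (PiLp.ext fun a => by simpa using h a)

lemma norm_one_ne_zero {ι : Type*} [Fintype ι] {x : EuclideanSpace ℂ ι} (hx : ‖x‖ = 1) :
    x ≠ 0 := by intro h; rw [h, norm_zero] at hx; norm_num at hx

lemma vecState_smul {ι : Type*} [Fintype ι] (c : ℂ) (x : EuclideanSpace ℂ ι)
    (h : Complex.normSq c = 1) : vecState (c • x) = vecState x := by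
  ext i j
  have hi : (c • x) i = c * x i := rfl
  have hj : (c • x) j = c * x j := rfl
  simp only [vecState, Matrix.of_apply, hi, hj, map_mul]
  have hc : c * (starRingEnd ℂ) c = 1 := by rw [Complex.mul_conj, h]; norm_num
  calc c * x i * ((starRingEnd ℂ) c * (starRingEnd ℂ) (x j))
      = (c * (starRingEnd ℂ) c) * (x i * (starRingEnd ℂ) (x j)) := by ring
    _ = x i * (starRingEnd ℂ) (x j) := by rw [hc, one_mul]

lemma exists_dual {ι : Type*} [Fintype ι] [DecidableEq ι] {E : Type*} [NormedAddCommGroup E]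
    [InnerProductSpace ℂ E] [FiniteDimensional ℂ E] {v : ι → E}
    (hv : LinearIndependent ℂ v) :
    ∃ L : ι → (E →ₗ[ℂ] ℂ), ∀ i j, L i (v j) = if i = j then 1 else 0 := by
  classical
  set K := Submodule.span ℂ (Set.range v) with hK
  have hmem : ∀ j, v j ∈ K := fun j => Submodule.subset_span ⟨j, rfl⟩
  let B : Module.Basis ι ℂ K := Module.Basis.span hv
  refine ⟨fun i => (B.coord i).comp ((K.orthogonalProjection).toLinearMap), fun i j => ?_⟩
  have h1 : (K.orthogonalProjection) (v j) = ⟨v j, hmem j⟩ := by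
    simpa using Submodule.orthogonalProjection_mem_subspace_eq_self (K := K) ⟨v j, hmem j⟩
  simp only [LinearMap.comp_apply, ContinuousLinearMap.coe_coe, h1]
  have h2 : (⟨v j, hmem j⟩ : K) = B j := by
    exact (Module.Basis.span_apply hv j).symm
  rw [h2, Module.Basis.coord_apply, B.repr_self, Finsupp.single_apply]
  simp [eq_comm]

def qform {ι : Type*} [Fintype ι] (v : EuclideanSpace ℂ ι) (A : Matrix ι ι ℂ) : ℂ :=
  ∑ q, ∑ q', (starRingEnd ℂ) (v q) * A q q' * v q'

lemma qform_add {ι : Type*} [Fintype ι] (v : EuclideanSpace ℂ ι) (A B : Matrix ι ι ℂ) :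
    qform v (A + B) = qform v A + qform v B := by
  simp [qform, Matrix.add_apply, mul_add, add_mul, Finset.sum_add_distrib]

lemma qform_smul {ι : Type*} [Fintype ι] (v : EuclideanSpace ℂ ι) (r : ℝ) (A : Matrix ι ι ℂ) :
    qform v (r • A) = (r : ℂ) * qform v A := by
  simp only [qform, Matrix.smul_apply, Complex.real_smul, Finset.mul_sum]
  exact Finset.sum_congr rfl fun q _ => Finset.sum_congr rfl fun q' _ => by ring

lemma qform_sum {ι κ : Type*} [Fintype ι] (v : EuclideanSpace ℂ ι) (s : Finset κ)
    (r : κ → ℝ) (A : κ → Matrix ι ι ℂ) :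
    qform v (∑ k ∈ s, r k • A k) = ∑ k ∈ s, (r k : ℂ) * qform v (A k) := by
  classical
  induction s using Finset.induction with
  | empty => simp [qform]
  | insert _ _ h ih => rw [Finset.sum_insert h, Finset.sum_insert h, qform_add, qform_smul, ih]

lemma qform_vecState {ι : Type*} [Fintype ι] (v x : EuclideanSpace ℂ ι) :
    qform v (vecState x) = (Complex.normSq (∑ q, (starRingEnd ℂ) (x q) * v q) : ℂ) := by
  have h1 : qform v (vecState x) =
      (∑ q, (starRingEnd ℂ) (v q) * x q) * (∑ q', (starRingEnd ℂ) (x q') * v q') := by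
    rw [Finset.sum_mul_sum]
    exact Finset.sum_congr rfl fun q _ => Finset.sum_congr rfl fun q' _ => by
      simp only [vecState, Matrix.of_apply]; ring
  have h2 : (∑ q, (starRingEnd ℂ) (v q) * x q) =
      (starRingEnd ℂ) (∑ q, (starRingEnd ℂ) (x q) * v q) := by
    rw [map_sum]
    exact Finset.sum_congr rfl fun q _ => by simp [mul_comm]
  rw [h1, h2, ← Complex.mul_conj]
  ring

lemma inner_eq {ι : Type*} [Fintype ι] (x v : EuclideanSpace ℂ ι) :
    (inner ℂ x v : ℂ) = ∑ q, (starRingEnd ℂ) (x q) * v q := by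
  simp [PiLp.inner_apply, RCLike.inner_apply, mul_comm]

variable {m n p : ℕ} (e : Fin p → EuclideanSpace ℂ (Fin m)) (f : Fin p → EuclideanSpace ℂ (Fin n))

lemma row_apply (L : EuclideanSpace ℂ (Fin n) →ₗ[ℂ] ℂ)
    (s : Finset (Fin p)) (c : Fin p → ℂ) (a : Fin m) :
    L (WithLp.toLp 2 fun b => (∑ i ∈ s, c i • tensorVec (e i) (f i)) (a, b)) =
      ∑ i ∈ s, c i * e i a * L (f i) := by
  have h : (WithLp.toLp 2 fun b => (∑ i ∈ s, c i • tensorVec (e i) (f i)) (a, b)) =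
      (∑ i ∈ s, (c i * e i a) • f i : EuclideanSpace ℂ (Fin n)) := by
    ext b
    show (∑ i ∈ s, c i • tensorVec (e i) (f i)) (a, b) = _
    rw [euc_sum_apply, euc_sum_apply]
    exact Finset.sum_congr rfl fun i _ => by
      show c i * (e i a * f i b) = (c i * e i a) * f i b
      ring
  rw [h, map_sum]
  exact Finset.sum_congr rfl fun i _ => by rw [map_smul, smul_eq_mul]

lemma V_li (he : ∀ i, ‖e i‖ = 1) (hf : LinearIndependent ℂ f) :
    LinearIndependent ℂ (fun i => tensorVec (e i) (f i)) := by
  obtain ⟨L, hL⟩ := exists_dual hf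
  rw [Fintype.linearIndependent_iff]
  intro c hc j
  obtain ⟨a, ha⟩ := exists_ne_zero_coord (norm_one_ne_zero (he j))
  have h1 := row_apply e f (L j) Finset.univ c a
  rw [hc] at h1
  have h0 : (WithLp.toLp 2 fun b => (0 : EuclideanSpace ℂ (Fin m × Fin n)) (a, b)) =
      (0 : EuclideanSpace ℂ (Fin n)) := rfl
  rw [h0, map_zero] at h1
  simp only [hL, mul_ite, mul_one, mul_zero, Finset.sum_ite_eq, Finset.mem_univ, if_true] at h1
  rcases mul_eq_zero.1 h1.symm with h | h
  · exact h
  · exact absurd h ha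

lemma W_li (he : ∀ i, ‖e i‖ = 1) (hf1 : ∀ i, ‖f i‖ = 1) (hf : LinearIndependent ℂ f)
    (r : Fin p → ℝ) (hr : ∑ i, r i • vecState (tensorVec (e i) (f i)) = 0) :
    ∀ j, r j = 0 := by
  obtain ⟨L, hL⟩ := exists_dual (V_li e f he hf)
  intro j
  have hVj : tensorVec (e j) (f j) ≠ 0 := by
    apply norm_one_ne_zero; rw [norm_tensorVec, he j, hf1 j, one_mul]
  obtain ⟨q', hq'⟩ := exists_ne_zero_coord hVj
  have hcol : (0 : EuclideanSpace ℂ (Fin m × Fin n)) =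
      (∑ i, ((r i : ℂ) * (starRingEnd ℂ) (tensorVec (e i) (f i) q')) • tensorVec (e i) (f i)
        : EuclideanSpace ℂ (Fin m × Fin n)) := by
    ext q
    rw [euc_sum_apply]
    show (0:ℂ) = _
    have h0 : (∑ i, r i • vecState (tensorVec (e i) (f i))) q q' = 0 := by rw [hr]; rfl
    rw [Matrix.sum_apply] at h0
    rw [← h0]
    refine Finset.sum_congr rfl fun i _ => ?_
    show (r i • vecState (tensorVec (e i) (f i))) q q' = _
    show r i • (vecState (tensorVec (e i) (f i)) q q') =
      ((r i : ℂ) * (starRingEnd ℂ) (tensorVec (e i) (f i) q')) * tensorVec (e i) (f i) q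
    simp only [vecState, Matrix.of_apply, Complex.real_smul]
    ring
  have h2 := congrArg (L j) hcol
  rw [map_zero, map_sum] at h2
  simp only [map_smul, smul_eq_mul, hL, mul_ite, mul_one, mul_zero,
    Finset.sum_ite_eq, Finset.mem_univ, if_true] at h2
  have h3 : (r j : ℂ) = 0 := by
    rcases mul_eq_zero.1 h2.symm with h | h
    · exact h
    · exact absurd h (by simpa using hq')
  exact_mod_cast h3

lemma W_li_sub (he : ∀ i, ‖e i‖ = 1) (hf1 : ∀ i, ‖f i‖ = 1) (hf : LinearIndependent ℂ f)
    (a b : Fin p → ℝ)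
    (hab : ∑ i, a i • vecState (tensorVec (e i) (f i)) =
      ∑ i, b i • vecState (tensorVec (e i) (f i))) :
    ∀ j, a j = b j := by
  intro j
  have h := W_li e f he hf1 hf (fun i => a i - b i) ?_ j
  · linarith
  · simp only [sub_smul]
    rw [Finset.sum_sub_distrib, hab, sub_self]

lemma product_lemma (he : ∀ i, ‖e i‖ = 1) (hf : LinearIndependent ℂ f)
    (hdist : ∀ i j : Fin p, i ≠ j → Submodule.span ℂ {e i} ≠ Submodule.span ℂ {e j})
    (T : Finset (Fin p)) (c : Fin p → ℂ)
    {x : EuclideanSpace ℂ (Fin m)} {y : EuclideanSpace ℂ (Fin n)}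
    (hxy : tensorVec x y = ∑ i ∈ T, c i • tensorVec (e i) (f i))
    (hne : tensorVec x y ≠ 0) :
    ∃ i ∈ T, ∃ c0 : ℂ, tensorVec x y = c0 • tensorVec (e i) (f i) := by
  classical
  obtain ⟨L, hL⟩ := exists_dual hf
  have hrow : ∀ j ∈ T, (L j y) • x = c j • e j := by
    intro j hj
    ext a
    have h1 := row_apply e f (L j) T c a
    rw [← hxy] at h1
    have h2 : (WithLp.toLp 2 fun b => tensorVec x y (a, b)) = ((x a) • y : EuclideanSpace ℂ (Fin n)) := rfl
    rw [h2, map_smul, smul_eq_mul] at h1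
    simp only [hL, mul_ite, mul_one, mul_zero, Finset.sum_ite_eq, hj, if_true] at h1
    show L j y * x a = c j * e j a
    rw [mul_comm, h1]
  have hex : ∃ i0 ∈ T, c i0 ≠ 0 := by
    by_contra h
    push_neg at h
    exact hne (hxy.trans (Finset.sum_eq_zero fun i hi => by rw [h i hi, zero_smul]))
  obtain ⟨i0, hi0T, hi0⟩ := hex
  have huniq : ∀ j ∈ T, j ≠ i0 → c j = 0 := by
    intro j hjT hji0
    by_contra hcj
    have hspan : ∀ k ∈ T, c k ≠ 0 → Submodule.span ℂ {e k} = Submodule.span ℂ {x} := by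
      intro k hkT hck
      have h1 : e k = ((c k)⁻¹ * L k y) • x := by
        calc e k = (c k)⁻¹ • (c k • e k) := by rw [smul_smul, inv_mul_cancel₀ hck, one_smul]
          _ = (c k)⁻¹ • ((L k y) • x) := by rw [hrow k hkT]
          _ = ((c k)⁻¹ * L k y) • x := by rw [smul_smul]
      have hd : ((c k)⁻¹ * L k y) ≠ 0 := by
        intro h0
        apply norm_one_ne_zero (he k)
        rw [h1, h0, zero_smul]
      rw [h1]
      exact Submodule.span_singleton_smul_eq (isUnit_iff_ne_zero.mpr hd) x
    exact hdist j i0 hji0 ((hspan j hjT hcj).trans (hspan i0 hi0T hi0).symm)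
  refine ⟨i0, hi0T, c i0, ?_⟩
  rw [hxy]
  exact Finset.sum_eq_single_of_mem i0 hi0T fun j hj hji0 => by rw [huniq j hj hji0, zero_smul]

lemma key {r : ℕ} (he : ∀ i, ‖e i‖ = 1) (hf1 : ∀ i, ‖f i‖ = 1)
    (hf : LinearIndependent ℂ f)
    (hdist : ∀ i j : Fin p, i ≠ j → Submodule.span ℂ {e i} ≠ Submodule.span ℂ {e j})
    (lam : Fin p → ℝ)
    (mu : Fin r → ℝ) (hmu : ∀ k, 0 ≤ mu k)
    (x : Fin r → EuclideanSpace ℂ (Fin m)) (y : Fin r → EuclideanSpace ℂ (Fin n))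
    (hx : ∀ k, ‖x k‖ = 1) (hy : ∀ k, ‖y k‖ = 1)
    (heq : ∑ k, mu k • vecState (tensorVec (x k) (y k)) =
      ∑ i, lam i • vecState (tensorVec (e i) (f i)))
    (k : Fin r) (hk : mu k ≠ 0) :
    ∃ i, vecState (tensorVec (x k) (y k)) = vecState (tensorVec (e i) (f i)) := by
  classical
  set V : Fin p → EuclideanSpace ℂ (Fin m × Fin n) := fun i => tensorVec (e i) (f i) with hV
  set u : Fin r → EuclideanSpace ℂ (Fin m × Fin n) := fun k => tensorVec (x k) (y k) with hu
  set T : Finset (Fin p) := Finset.univ.filter (fun i => lam i ≠ 0) with hT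
  set K : Submodule ℂ (EuclideanSpace ℂ (Fin m × Fin n)) :=
    Submodule.span ℂ (↑(T.image V)) with hKdef
  have hukK : u k ∈ K := by
    rw [← Submodule.orthogonal_orthogonal K]
    rw [Submodule.mem_orthogonal]
    intro w hw
    have hwV : ∀ i, lam i ≠ 0 → (inner ℂ (V i) w : ℂ) = 0 := by
      intro i hi
      exact (Submodule.mem_orthogonal K w).mp hw (V i)
        (Submodule.subset_span (Finset.mem_coe.2 (Finset.mem_image_of_mem V
          (Finset.mem_filter.2 ⟨Finset.mem_univ i, hi⟩))))
    have h1 := congrArg (qform w) heq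
    rw [qform_sum, qform_sum] at h1
    have hRHS : ∑ i, (lam i : ℂ) * qform w (vecState (V i)) = 0 := by
      apply Finset.sum_eq_zero
      intro i _
      by_cases hi : lam i = 0
      · rw [hi]; simp
      · rw [qform_vecState, ← inner_eq, hwV i hi]
        simp
    rw [hRHS] at h1
    have hterms : ∀ j, mu j * Complex.normSq (∑ q, (starRingEnd ℂ) (u j q) * w q) = 0 := by
      have hreal : ∑ j, mu j * Complex.normSq (∑ q, (starRingEnd ℂ) (u j q) * w q) = 0 := by
        have hc : ((∑ j, mu j * Complex.normSq (∑ q, (starRingEnd ℂ) (u j q) * w q) : ℝ)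
            : ℂ) = 0 := by
          push_cast
          rw [← h1]
          exact Finset.sum_congr rfl fun j _ => by rw [qform_vecState]
        exact_mod_cast hc
      intro j
      have hnn : ∀ j ∈ Finset.univ (α := Fin r),
          0 ≤ mu j * Complex.normSq (∑ q, (starRingEnd ℂ) (u j q) * w q) :=
        fun j _ => mul_nonneg (hmu j) (Complex.normSq_nonneg _)
      exact (Finset.sum_eq_zero_iff_of_nonneg hnn).mp hreal j (Finset.mem_univ j)
    have hinner : (inner ℂ (u k) w : ℂ) = 0 := by
      rw [inner_eq]
      rcases mul_eq_zero.1 (hterms k) with h | h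
      · exact absurd h hk
      · exact Complex.normSq_eq_zero.mp h
    rw [← inner_conj_symm, hinner, map_zero]
  have hVinj : Function.Injective V := (V_li e f he hf).injective
  obtain ⟨g, -, hg⟩ := Submodule.mem_span_finset.1 hukK
  have hrep : u k = ∑ i ∈ T, (g (V i)) • V i := by
    rw [← hg, Finset.sum_image (fun i _ j _ h => hVinj h)]
  have hune : u k ≠ 0 := by
    apply norm_one_ne_zero
    show ‖tensorVec (x k) (y k)‖ = 1
    rw [norm_tensorVec, hx k, hy k, one_mul]
  obtain ⟨i0, _, c0, hc0⟩ := product_lemma e f he hf hdist T (fun i => g (V i)) hrep hune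
  refine ⟨i0, ?_⟩
  have h1 : ‖tensorVec (x k) (y k)‖ = 1 := by rw [norm_tensorVec, hx k, hy k, one_mul]
  have h2 : ‖tensorVec (e i0) (f i0)‖ = 1 := by rw [norm_tensorVec, he i0, hf1 i0, one_mul]
  rw [hc0, norm_smul, h2, mul_one] at h1
  have hns : Complex.normSq c0 = 1 := by
    rw [Complex.normSq_eq_norm_sq, h1]; norm_num
  show vecState (tensorVec (x k) (y k)) = vecState (tensorVec (e i0) (f i0))
  rw [hc0, vecState_smul c0 _ hns]

lemma convex_sepSet {m n : ℕ} : Convex ℝ (sepSet m n) := by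
  rintro ρ1 ⟨r1, lam1, x1, y1, hlam1, hsum1, hx1, hy1, rfl⟩
    ρ2 ⟨r2, lam2, x2, y2, hlam2, hsum2, hx2, hy2, rfl⟩ a b ha hb hab
  refine ⟨r1 + r2, Fin.append (fun k => a * lam1 k) (fun k => b * lam2 k),
    Fin.append x1 x2, Fin.append y1 y2, ?_, ?_, ?_, ?_, ?_⟩
  · intro i
    refine Fin.addCases (fun k => ?_) (fun k => ?_) i
    · rw [Fin.append_left]; exact mul_nonneg ha (hlam1 k)
    · rw [Fin.append_right]; exact mul_nonneg hb (hlam2 k)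
  · rw [Fin.sum_univ_add]
    simp only [Fin.append_left, Fin.append_right]
    rw [← Finset.mul_sum, ← Finset.mul_sum, hsum1, hsum2, mul_one, mul_one, hab]
  · intro i
    refine Fin.addCases (fun k => ?_) (fun k => ?_) i
    · rw [Fin.append_left]; exact hx1 k
    · rw [Fin.append_right]; exact hx2 k
  · intro i
    refine Fin.addCases (fun k => ?_) (fun k => ?_) i
    · rw [Fin.append_left]; exact hy1 k
    · rw [Fin.append_right]; exact hy2 k
  · rw [Fin.sum_univ_add]
    simp only [Fin.append_left, Fin.append_right]
    rw [Finset.smul_sum, Finset.smul_sum]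
    congr 1 <;> exact Finset.sum_congr rfl fun k _ => by rw [smul_smul]

section ConvexAbs
variable {E : Type*} [AddCommGroup E] [Module ℝ E]

lemma mem_hull_iff {p : ℕ} {W : Fin p → E} (hinj : Function.Injective W) (A : E) :
    A ∈ convexHull ℝ {ρ | ∃ i : Fin p, ρ = W i} ↔
      ∃ lam : Fin p → ℝ, (∀ i, 0 ≤ lam i) ∧ ∑ i, lam i = 1 ∧ A = ∑ i, lam i • W i := by
  classical
  have hset : {ρ | ∃ i : Fin p, ρ = W i} = ↑(Finset.univ.image W) := by
    ext ρ; simp [eq_comm]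
  constructor
  · intro hA
    rw [hset, Finset.convexHull_eq] at hA
    obtain ⟨w, hw0, hw1, hwA⟩ := hA
    refine ⟨fun i => w (W i), fun i => hw0 _ (by simp), ?_, ?_⟩
    · rw [← hw1]
      exact (Finset.sum_image (fun i _ j _ h => hinj h)).symm
    · rw [← hwA, Finset.centerMass, hw1, inv_one, one_smul]
      rw [Finset.sum_image (fun i _ j _ h => hinj h)]
      rfl
  · rintro ⟨lam, h0, h1, rfl⟩
    exact Convex.sum_mem (convex_convexHull ℝ _) (fun i _ => h0 i) h1
      (fun i _ => subset_convexHull ℝ _ ⟨i, rfl⟩)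

lemma hull_sub_sum {p : ℕ} {W : Fin p → E} {r : ℕ} (mu : Fin r → ℝ) (A : Fin r → E)
    (hmu : ∀ k, 0 ≤ mu k) (hsum : ∑ k, mu k = 1)
    (hA : ∀ k, mu k ≠ 0 → ∃ i, A k = W i) :
    ∑ k, mu k • A k ∈ convexHull ℝ {ρ | ∃ i : Fin p, ρ = W i} := by
  classical
  rw [← Finset.sum_filter_of_ne (p := fun k => mu k ≠ 0)
    (fun k _ h => fun h0 => h (by rw [h0, zero_smul]))]
  apply Convex.sum_mem (convex_convexHull ℝ _)
  · exact fun k _ => hmu k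
  · rw [Finset.sum_filter_of_ne (fun k _ h => h), hsum]
  · intro k hk
    exact subset_convexHull ℝ _ (hA k (Finset.mem_filter.1 hk).2)
end ConvexAbs

/-- The convex hull of the pure states `ω_{eᵢ⊗fᵢ}` is a face of the separable states. -/
lemma hull_isFace (he : ∀ i, ‖e i‖ = 1) (hf1 : ∀ i, ‖f i‖ = 1) (hf : LinearIndependent ℂ f)
    (hdist : ∀ i j : Fin p, i ≠ j → Submodule.span ℂ {e i} ≠ Submodule.span ℂ {e j})
    (hWinj : Function.Injective (fun i => vecState (tensorVec (e i) (f i)))) :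
    IsFace (sepSet m n)
      (convexHull ℝ {ρ | ∃ i : Fin p, ρ = vecState (tensorVec (e i) (f i))}) := by
  classical
  refine ⟨convexHull_min ?_ convex_sepSet, convex_convexHull ℝ _, ?_⟩
  · rintro ρ ⟨i, rfl⟩
    exact ⟨1, fun _ => 1, fun _ => e i, fun _ => f i, fun _ => zero_le_one, by simp,
      fun _ => he i, fun _ => hf1 i, by simp⟩
  intro ρ1 h1 ρ2 h2 z hz hzX
  obtain ⟨t1, t2, ht1, ht2, htsum, rfl⟩ := hz
  obtain ⟨lam, hlam0, hlam1, hlamz⟩ := (mem_hull_iff hWinj _).1 hzX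
  obtain ⟨r1, mu1, x1, y1, hmu1, hsum1, hx1, hy1, hρ1⟩ := h1
  obtain ⟨r2, mu2, x2, y2, hmu2, hsum2, hx2, hy2, hρ2⟩ := h2
  set mu : Fin (r1 + r2) → ℝ := Fin.append (fun k => t1 * mu1 k) (fun k => t2 * mu2 k) with hmu
  set xs := Fin.append x1 x2 with hxs
  set ys := Fin.append y1 y2 with hys
  have hmunn : ∀ k, 0 ≤ mu k := by
    intro k
    refine Fin.addCases (fun k => ?_) (fun k => ?_) k
    · rw [hmu, Fin.append_left]; exact mul_nonneg ht1.le (hmu1 k)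
    · rw [hmu, Fin.append_right]; exact mul_nonneg ht2.le (hmu2 k)
  have hxsn : ∀ k, ‖xs k‖ = 1 := by
    intro k
    refine Fin.addCases (fun k => ?_) (fun k => ?_) k
    · rw [hxs, Fin.append_left]; exact hx1 k
    · rw [hxs, Fin.append_right]; exact hx2 k
  have hysn : ∀ k, ‖ys k‖ = 1 := by
    intro k
    refine Fin.addCases (fun k => ?_) (fun k => ?_) k
    · rw [hys, Fin.append_left]; exact hy1 k
    · rw [hys, Fin.append_right]; exact hy2 k
  have hcomb : ∑ k, mu k • vecState (tensorVec (xs k) (ys k)) =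
      ∑ i, lam i • vecState (tensorVec (e i) (f i)) := by
    rw [← hlamz, Fin.sum_univ_add]
    simp only [hmu, hxs, hys, Fin.append_left, Fin.append_right]
    rw [hρ1, hρ2, Finset.smul_sum, Finset.smul_sum]
    congr 1 <;> exact Finset.sum_congr rfl fun k _ => by rw [smul_smul]
  have hkey : ∀ k, mu k ≠ 0 →
      ∃ i, vecState (tensorVec (xs k) (ys k)) = vecState (tensorVec (e i) (f i)) :=
    fun k hk => key e f he hf1 hf hdist lam mu hmunn xs ys hxsn hysn hcomb k hk
  constructor
  · rw [hρ1]
    apply hull_sub_sum mu1 _ hmu1 hsum1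
    intro k hk
    have := hkey (Fin.castAdd r2 k) ?_
    · obtain ⟨i, hi⟩ := this
      refine ⟨i, ?_⟩
      rw [← hi]
      simp only [hxs, hys, Fin.append_left]
    · rw [hmu, Fin.append_left]
      exact mul_ne_zero (ne_of_gt ht1) hk
  · rw [hρ2]
    apply hull_sub_sum mu2 _ hmu2 hsum2
    intro k hk
    have := hkey (Fin.natAdd r1 k) ?_
    · obtain ⟨i, hi⟩ := this
      refine ⟨i, ?_⟩
      rw [← hi]
      simp only [hxs, hys, Fin.append_right]
    · rw [hmu, Fin.append_right]
      exact mul_ne_zero (ne_of_gt ht2) hk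

end FaceSimplexAux
/-- With the `fᵢ` linearly independent and the lines `ℂeᵢ` pairwise distinct, the face of
`S` generated by the pure product states `ω_{eᵢ⊗fᵢ}` equals their convex hull, and this
face is a simplex. -/
theorem face_of_sep_is_simplex {m n p : ℕ}
    (e : Fin p → EuclideanSpace ℂ (Fin m)) (f : Fin p → EuclideanSpace ℂ (Fin n))
    (he : ∀ i, ‖e i‖ = 1) (hf1 : ∀ i, ‖f i‖ = 1) (hf : LinearIndependent ℂ f)
    (hdist : ∀ i j : Fin p, i ≠ j →
      Submodule.span ℂ {e i} ≠ Submodule.span ℂ {e j}) :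
    faceGen (sepSet m n) {ρ | ∃ i : Fin p, ρ = vecState (tensorVec (e i) (f i))} =
      convexHull ℝ {ρ | ∃ i : Fin p, ρ = vecState (tensorVec (e i) (f i))} ∧
    IsSimplex
      (faceGen (sepSet m n) {ρ | ∃ i : Fin p, ρ = vecState (tensorVec (e i) (f i))}) := by
  classical
  have hWinj : Function.Injective (fun i => vecState (tensorVec (e i) (f i))) := by
    intro i j hij
    by_contra hne
    have h := FaceSimplexAux.W_li e f he hf1 hf
      (fun k => (if k = i then 1 else 0) - (if k = j then 1 else 0)) ?_ i
    · simp [hne] at h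
    · simp only [sub_smul, Finset.sum_sub_distrib, ite_smul, one_smul, zero_smul]
      rw [Finset.sum_ite_eq', Finset.sum_ite_eq']
      simp only [Finset.mem_univ, if_true]
      rw [show vecState (tensorVec (e i) (f i)) = vecState (tensorVec (e j) (f j)) from hij,
        sub_self]
  have hface := FaceSimplexAux.hull_isFace e f he hf1 hf hdist hWinj
  have hEq : faceGen (sepSet m n) {ρ | ∃ i : Fin p, ρ = vecState (tensorVec (e i) (f i))} =
      convexHull ℝ {ρ | ∃ i : Fin p, ρ = vecState (tensorVec (e i) (f i))} := by
    apply subset_antisymm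
    · exact Set.sInter_subset_of_mem ⟨hface, subset_convexHull ℝ _⟩
    · apply Set.subset_sInter
      rintro F ⟨hF, hXF⟩
      exact convexHull_min hXF hF.2.1
  refine ⟨hEq, ?_⟩
  rw [hEq]
  have hext : ∀ j : Fin p, vecState (tensorVec (e j) (f j)) ∈ Set.extremePoints ℝ
      (convexHull ℝ {ρ | ∃ i : Fin p, ρ = vecState (tensorVec (e i) (f i))}) := by
    intro j
    rw [mem_extremePoints]
    refine ⟨subset_convexHull ℝ _ ⟨j, rfl⟩, ?_⟩
    intro a ha b hb hseg
    obtain ⟨α, hα0, hα1, rfl⟩ := (FaceSimplexAux.mem_hull_iff hWinj _).1 ha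
    obtain ⟨β, hβ0, hβ1, rfl⟩ := (FaceSimplexAux.mem_hull_iff hWinj _).1 hb
    obtain ⟨t1, t2, ht1, ht2, hts, heqn⟩ := hseg
    have hco : ∀ i, t1 * α i + t2 * β i = (if i = j then 1 else 0) := by
      apply FaceSimplexAux.W_li_sub e f he hf1 hf
      have hl : ∑ i, (t1 * α i + t2 * β i) • vecState (tensorVec (e i) (f i)) =
          t1 • (∑ i, α i • vecState (tensorVec (e i) (f i))) +
          t2 • (∑ i, β i • vecState (tensorVec (e i) (f i))) := by
        rw [Finset.smul_sum, Finset.smul_sum, ← Finset.sum_add_distrib]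
        exact Finset.sum_congr rfl fun i _ => by rw [add_smul, smul_smul, smul_smul]
      rw [hl, heqn]
      rw [show ∑ i, (if i = j then (1:ℝ) else 0) • vecState (tensorVec (e i) (f i)) =
          vecState (tensorVec (e j) (f j)) by
        simp only [ite_smul, one_smul, zero_smul]
        rw [Finset.sum_ite_eq']
        simp]
    have hzero : ∀ i, i ≠ j → α i = 0 ∧ β i = 0 := by
      intro i hij
      have h := hco i
      rw [if_neg hij] at h
      have h1 : 0 ≤ t1 * α i := mul_nonneg ht1.le (hα0 i)
      have h2 : 0 ≤ t2 * β i := mul_nonneg ht2.le (hβ0 i)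
      constructor
      · have : t1 * α i = 0 := by linarith
        rcases mul_eq_zero.1 this with h' | h'
        · exact absurd h' (ne_of_gt ht1)
        · exact h'
      · have : t2 * β i = 0 := by linarith
        rcases mul_eq_zero.1 this with h' | h'
        · exact absurd h' (ne_of_gt ht2)
        · exact h'
    have hαj : α j = 1 := by
      rw [← hα1]
      exact (Finset.sum_eq_single_of_mem j (Finset.mem_univ j)
        fun i _ h => (hzero i h).1).symm
    have hβj : β j = 1 := by
      rw [← hβ1]
      exact (Finset.sum_eq_single_of_mem j (Finset.mem_univ j)
        fun i _ h => (hzero i h).2).symm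
    constructor
    · rw [Finset.sum_eq_single_of_mem j (Finset.mem_univ j)
        (fun i _ h => by rw [(hzero i h).1, zero_smul]), hαj, one_smul]
    · rw [Finset.sum_eq_single_of_mem j (Finset.mem_univ j)
        (fun i _ h => by rw [(hzero i h).2, zero_smul]), hβj, one_smul]
  -- the simplex property
  intro ρ hρ
  obtain ⟨lam, hlam0, hlam1, hρeq⟩ := (FaceSimplexAux.mem_hull_iff hWinj _).1 hρ
  have hXsub : Set.extremePoints ℝ
      (convexHull ℝ {ρ | ∃ i : Fin p, ρ = vecState (tensorVec (e i) (f i))}) ⊆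
      {ρ | ∃ i : Fin p, ρ = vecState (tensorVec (e i) (f i))} :=
    extremePoints_convexHull_subset
  set W : Fin p → Matrix (Fin m × Fin n) (Fin m × Fin n) ℂ :=
    fun i => vecState (tensorVec (e i) (f i)) with hWdef
  set w0 : Fin p →₀ ℝ := Finsupp.equivFunOnFinite.symm lam with hw0
  have hw0a : ∀ i, w0 i = lam i := fun i => rfl
  have hsupp : (Finsupp.mapDomain W w0).support ⊆ Finset.univ.image W := by
    refine (Finsupp.mapDomain_support).trans ?_
    exact Finset.image_subset_image (Finset.subset_univ _)
  refine ⟨Finsupp.mapDomain W w0, ⟨?_, ?_, ?_, ?_⟩, ?_⟩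
  · -- support ⊆ extreme points
    intro A hA
    obtain ⟨i, _, rfl⟩ := Finset.mem_image.1 (hsupp (Finset.mem_coe.1 hA))
    exact hext i
  · -- nonneg
    intro A
    by_cases hA : A ∈ (Finsupp.mapDomain W w0).support
    · obtain ⟨i, _, rfl⟩ := Finset.mem_image.1 (hsupp hA)
      rw [Finsupp.mapDomain_apply hWinj, hw0a]
      exact hlam0 i
    · rw [Finsupp.notMem_support_iff.mp hA]
  · -- total mass 1
    rw [Finsupp.sum_mapDomain_index (fun _ => rfl) (fun _ _ _ => rfl)]
    rw [Finsupp.sum_fintype _ _ (fun _ => rfl)]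
    simpa [hw0a] using hlam1
  · -- barycenter
    rw [Finsupp.sum_mapDomain_index (fun b => zero_smul ℝ b) (fun b m₁ m₂ => add_smul m₁ m₂ b)]
    rw [Finsupp.sum_fintype w0 (fun a m => m • W a) (fun a => zero_smul ℝ (W a))]
    exact hρeq.symm
  · -- uniqueness
    rintro w' ⟨hsupp', hpos', hmass', hbary'⟩
    have hsuppX : w'.support ⊆ Finset.univ.image W := by
      intro A hA
      obtain ⟨i, hi⟩ := hXsub (hsupp' (Finset.mem_coe.2 hA))
      exact Finset.mem_image.2 ⟨i, Finset.mem_univ i, hi.symm⟩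
    have hinjOn : ∀ i ∈ Finset.univ, ∀ j ∈ Finset.univ, W i = W j → i = j :=
      fun i _ j _ h => hWinj h
    have hmass2 : ∑ i, w' (W i) = 1 := by
      rw [← hmass', Finsupp.sum_of_support_subset w' hsuppX _ (fun _ _ => rfl),
        Finset.sum_image hinjOn]
    have hbary2 : ∑ i, w' (W i) • W i = ρ := by
      rw [← hbary', Finsupp.sum_of_support_subset w' hsuppX _ (fun A _ => zero_smul ℝ A),
        Finset.sum_image hinjOn]
    have hlam_eq : ∀ i, w' (W i) = lam i := by
      apply FaceSimplexAux.W_li_sub e f he hf1 hf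
      rw [hbary2, hρeq]
    ext A
    by_cases hA : ∃ i, A = W i
    · obtain ⟨i, rfl⟩ := hA
      rw [Finsupp.mapDomain_apply hWinj, hw0a, hlam_eq]
    · have h1 : w' A = 0 := by
        rw [← Finsupp.notMem_support_iff]
        intro h
        obtain ⟨i, _, hi⟩ := Finset.mem_image.1 (hsuppX h)
        exact hA ⟨i, hi.symm⟩
      have h2 : (Finsupp.mapDomain W w0) A = 0 := by
        rw [← Finsupp.notMem_support_iff]
        intro h
        obtain ⟨i, _, hi⟩ := Finset.mem_image.1 (hsupp h)
        exact hA ⟨i, hi.symm⟩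
      rw [h1, h2]

end
end

section
/- Let m, n > 1 and k ≤ max(m,n). Then V_k is open in S_k, the set of separable states of length at most k, with respect to the subspace topology induced by the norm topology on matrices. -/
open scoped Kronecker ComplexOrder

noncomputable section

/-- `ω` admits a decomposition as a convex combination of `r` pure product states. -/
def HasDecompOfSize (m n r : ℕ) (ω : Matrix (Fin m × Fin n) (Fin m × Fin n) ℂ) : Prop :=
  ∃ (lam : Fin r → ℝ) (x : Fin r → EuclideanSpace ℂ (Fin m))
    (y : Fin r → EuclideanSpace ℂ (Fin n)),
    (∀ i, 0 ≤ lam i) ∧ (∑ i, lam i) = 1 ∧ (∀ i, ‖x i‖ = 1) ∧ (∀ i, ‖y i‖ = 1) ∧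
    ω = ∑ i, lam i • vecState (tensorVec (x i) (y i))

/-- The separable state `ω` has length (optimal ensemble cardinality) exactly `k`. -/
def HasLength (m n k : ℕ) (ω : Matrix (Fin m × Fin n) (Fin m × Fin n) ℂ) : Prop :=
  HasDecompOfSize m n k ω ∧ ∀ r < k, ¬ HasDecompOfSize m n r ω

/-- `S_k`: the set of separable states of length at most `k`. -/
def lengthLeSet (m n k : ℕ) : Set (Matrix (Fin m × Fin n) (Fin m × Fin n) ℂ) :=
  {ω | ∃ r ≤ k, HasDecompOfSize m n r ω}

/-- `V_k`: the states `ω = Σᵢ λᵢ ω_{eᵢ⊗fᵢ}` with all `λᵢ > 0`, the lines `ℂeᵢ` pairwise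
distinct, and the `fᵢ` linearly independent. -/
def Vset (m n k : ℕ) : Set (Matrix (Fin m × Fin n) (Fin m × Fin n) ℂ) :=
  {ω | ∃ (lam : Fin k → ℝ) (e : Fin k → EuclideanSpace ℂ (Fin m))
        (f : Fin k → EuclideanSpace ℂ (Fin n)),
      (∀ i, 0 < lam i) ∧ (∑ i, lam i) = 1 ∧ (∀ i, ‖e i‖ = 1) ∧ (∀ i, ‖f i‖ = 1) ∧
      (∀ i j : Fin k, i ≠ j → Submodule.span ℂ {e i} ≠ Submodule.span ℂ {e j}) ∧
      LinearIndependent ℂ f ∧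
      ω = ∑ i, lam i • vecState (tensorVec (e i) (f i))}

namespace VsetAux

open Complex Finset

local notation "conj'" => starRingEnd ℂ

/-- Evaluation of a finite sum in `EuclideanSpace`. -/
lemma euc_sum_apply {ι κ : Type*} [Fintype ι] (s : Finset κ) (v : κ → EuclideanSpace ℂ ι)
    (b : ι) : (∑ j ∈ s, v j) b = ∑ j ∈ s, v j b := by
  induction s using Finset.cons_induction with
  | empty => rfl
  | cons a s ha ih => rw [Finset.sum_cons, Finset.sum_cons, ← ih]; rfl

lemma euc_inner_eq {ι : Type*} [Fintype ι] (u v : EuclideanSpace ℂ ι) :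
    (inner ℂ u v : ℂ) = ∑ p, conj' (u p) * v p := by
  rw [PiLp.inner_apply]; simp [RCLike.inner_apply, mul_comm]

lemma euc_ne_zero {ι : Type*} [Fintype ι] {v : EuclideanSpace ℂ ι} (hv : v ≠ 0) :
    ∃ b, v b ≠ 0 := by
  by_contra h
  push_neg at h
  exact hv (PiLp.ext h)

/-- Dual family for a linearly independent family in a Euclidean space. -/
lemma exists_dual_family {n k : ℕ} {f : Fin k → EuclideanSpace ℂ (Fin n)}
    (hf : LinearIndependent ℂ f) :
    ∃ φ : Fin k → (EuclideanSpace ℂ (Fin n) →ₗ[ℂ] ℂ),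
      ∀ i j, φ j (f i) = if i = j then 1 else 0 := by
  set S := Submodule.span ℂ (Set.range f) with hS
  haveI : FiniteDimensional ℂ S := FiniteDimensional.span_of_finite ℂ (Set.finite_range f)
  let b : Module.Basis (Fin k) ℂ S := Module.Basis.span hf
  refine ⟨fun j => (b.coord j).comp ((S.orthogonalProjectionOnto).toLinearMap), fun i j => ?_⟩
  have hmem : f i ∈ S := Submodule.subset_span ⟨i, rfl⟩
  have h1 : S.orthogonalProjectionOnto (f i) = ⟨f i, hmem⟩ :=
    S.orthogonalProjectionOnto_mem_subspace_eq_self ⟨f i, hmem⟩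
  have h2 : b i = ⟨f i, hmem⟩ := Module.Basis.span_apply hf i
  simp only [LinearMap.comp_apply, ContinuousLinearMap.coe_coe, h1, ← h2,
    Module.Basis.coord_apply, Module.Basis.repr_self]
  simp [Finsupp.single_apply]


lemma unit_ne_zero' {E : Type*} [NormedAddCommGroup E] {x : E} (hx : ‖x‖ = 1) : x ≠ 0 := by
  intro h; rw [h, norm_zero] at hx; norm_num at hx

/-- Applying a dual functional in the second leg to an identity
`∑ i, c i • e i ⊗ f i = w`. -/
lemma tensor_sum_apply_phi {m n k : ℕ} (e : Fin k → EuclideanSpace ℂ (Fin m))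
    (f : Fin k → EuclideanSpace ℂ (Fin n)) (φ : EuclideanSpace ℂ (Fin n) →ₗ[ℂ] ℂ)
    (c : Fin k → ℂ) (w : EuclideanSpace ℂ (Fin m × Fin n))
    (hw : ∑ i, c i • tensorVec (e i) (f i) = w) (a : Fin m) :
    φ (WithLp.toLp 2 (fun b => w (a, b))) = ∑ i, c i * e i a * φ (f i) := by
  have hrow : (WithLp.toLp 2 (fun b => w (a, b)) : EuclideanSpace ℂ (Fin n)) = ∑ i, (c i * e i a) • f i := by
    ext b
    rw [euc_sum_apply]
    have := congrArg (fun v : EuclideanSpace ℂ (Fin m × Fin n) => v (a, b)) hw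
    rw [euc_sum_apply] at this
    rw [← this]
    apply Finset.sum_congr rfl
    intro i _
    show c i * (e i a * f i b) = (c i * e i a) * f i b
    ring
  rw [hrow, map_sum]
  apply Finset.sum_congr rfl
  intro i _
  rw [map_smul]
  simp [mul_assoc]

lemma tensorVec_ne_zero {m n : ℕ} {x : EuclideanSpace ℂ (Fin m)}
    {y : EuclideanSpace ℂ (Fin n)} (hx : x ≠ 0) (hy : y ≠ 0) :
    tensorVec x y ≠ 0 := by
  obtain ⟨a, ha⟩ := euc_ne_zero hx
  obtain ⟨b, hb⟩ := euc_ne_zero hy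
  intro h
  have : tensorVec x y (a, b) = 0 := by rw [h]; rfl
  exact (mul_ne_zero ha hb) this

lemma unit_ne_zero {ι : Type*} [Fintype ι] {x : EuclideanSpace ℂ ι} (hx : ‖x‖ = 1) : x ≠ 0 := by
  intro h; rw [h, norm_zero] at hx; norm_num at hx

lemma tensor_linearIndependent {m n k : ℕ} {e : Fin k → EuclideanSpace ℂ (Fin m)}
    {f : Fin k → EuclideanSpace ℂ (Fin n)} (he0 : ∀ i, e i ≠ 0)
    (hf : LinearIndependent ℂ f) :
    LinearIndependent ℂ (fun i => tensorVec (e i) (f i)) := by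
  obtain ⟨φ, hφ⟩ := exists_dual_family hf
  rw [Fintype.linearIndependent_iff]
  intro c hc j
  obtain ⟨a, ha⟩ := euc_ne_zero (he0 j)
  have h := tensor_sum_apply_phi e f (φ j) c 0 hc a
  have h0 : (WithLp.toLp 2 (fun b => (0 : EuclideanSpace ℂ (Fin m × Fin n)) (a, b)) : EuclideanSpace ℂ (Fin n)) =
      (0 : EuclideanSpace ℂ (Fin n)) := rfl
  rw [h0, map_zero] at h
  have : ∑ i, c i * e i a * φ j (f i) = c j * e j a := by
    rw [Finset.sum_eq_single j]
    · rw [hφ j j]; simp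
    · intro i _ hij; rw [hφ i j, if_neg hij]; ring
    · intro hj; exact absurd (Finset.mem_univ j) hj
  rw [this] at h
  rcases mul_eq_zero.mp h.symm with h' | h'
  · exact h'
  · exact absurd h' ha


/-- A product vector in the span of the `e i ⊗ f i` is a multiple of one of them. -/
lemma product_in_span {m n k : ℕ} {e : Fin k → EuclideanSpace ℂ (Fin m)}
    {f : Fin k → EuclideanSpace ℂ (Fin n)} (he : ∀ i, ‖e i‖ = 1) (hfn : ∀ i, ‖f i‖ = 1)
    (hdist : ∀ i j : Fin k, i ≠ j → Submodule.span ℂ {e i} ≠ Submodule.span ℂ {e j})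
    (hf : LinearIndependent ℂ f)
    {x : EuclideanSpace ℂ (Fin m)} {y : EuclideanSpace ℂ (Fin n)}
    (hx : ‖x‖ = 1) (hy : ‖y‖ = 1) (c : Fin k → ℂ)
    (hw : ∑ i, c i • tensorVec (e i) (f i) = tensorVec x y) :
    ∃ j, ∃ α β : ℂ, ‖α‖ = 1 ∧ ‖β‖ = 1 ∧ x = α • e j ∧ y = β • f j := by
  obtain ⟨φ, hφ⟩ := exists_dual_family hf
  have hx0 := unit_ne_zero hx
  have hy0 := unit_ne_zero hy
  -- key identity : for every j, c j • e j = (φ j y) • x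
  have key : ∀ j, c j • e j = (φ j y) • x := by
    intro j
    ext a
    have h := tensor_sum_apply_phi e f (φ j) c _ hw a
    have hrow : (WithLp.toLp 2 (fun b => tensorVec x y (a, b)) : EuclideanSpace ℂ (Fin n)) = x a • y := rfl
    rw [hrow, map_smul] at h
    have hsum : ∑ i, c i * e i a * φ j (f i) = c j * e j a := by
      rw [Finset.sum_eq_single j]
      · rw [hφ j j]; simp
      · intro i _ hij; rw [hφ i j, if_neg hij]; ring
      · intro hj; exact absurd (Finset.mem_univ j) hj
    rw [hsum] at h
    show c j * e j a = (φ j y) * x a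
    rw [← h, smul_eq_mul]; ring
  -- there exists j with c j ≠ 0
  have hex : ∃ j, c j ≠ 0 := by
    by_contra h
    push_neg at h
    have hz : ∑ i, c i • tensorVec (e i) (f i) = 0 := by
      apply Finset.sum_eq_zero; intro i _; rw [h i, zero_smul]
    rw [hw] at hz
    exact tensorVec_ne_zero hx0 hy0 hz
  obtain ⟨j, hj⟩ := hex
  -- uniqueness of such j
  have huniq : ∀ j', c j' ≠ 0 → j' = j := by
    intro j' hj'
    by_contra hne
    have hspan : ∀ i, c i ≠ 0 → Submodule.span ℂ {e i} = Submodule.span ℂ {x} := by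
      intro i hi
      have hk := key i
      have hφy : φ i y ≠ 0 := by
        intro h0
        rw [h0, zero_smul] at hk
        exact (smul_ne_zero hi (unit_ne_zero (he i))) hk
      have hei : e i = ((c i)⁻¹ * φ i y) • x := by
        rw [mul_smul, ← hk, ← mul_smul, inv_mul_cancel₀ hi, one_smul]
      rw [hei]
      exact Submodule.span_singleton_smul_eq ((mul_ne_zero (inv_ne_zero hi) hφy).isUnit) x
    exact hdist j' j hne ((hspan j' hj').trans (hspan j hj).symm)
  -- x = α • e j
  have hφjy : φ j y ≠ 0 := by
    intro h0
    have hk := key j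
    rw [h0, zero_smul] at hk
    exact (smul_ne_zero hj (unit_ne_zero (he j))) hk
  set α : ℂ := (φ j y)⁻¹ * c j with hα
  have hαx : x = α • e j := by
    rw [hα, mul_smul, key j, ← mul_smul, inv_mul_cancel₀ hφjy, one_smul]
  have hα0 : α ≠ 0 := mul_ne_zero (inv_ne_zero hφjy) hj
  have hαnorm : ‖α‖ = 1 := by
    have h := hx
    rw [hαx, norm_smul, he j, mul_one] at h
    exact h
  -- y = β • f j
  have hsum : tensorVec x y = c j • tensorVec (e j) (f j) := by
    rw [← hw, Finset.sum_eq_single j]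
    · intro i _ hij
      rcases eq_or_ne (c i) 0 with h0 | h0
      · rw [h0, zero_smul]
      · exact absurd (huniq i h0) hij
    · intro hj'; exact absurd (Finset.mem_univ j) hj'
  obtain ⟨a, ha⟩ := euc_ne_zero (unit_ne_zero (he j))
  set β : ℂ := α⁻¹ * c j with hβ
  have hβy : y = β • f j := by
    ext b
    have h1 : x a * y b = c j * (e j a * f j b) := congrArg (fun v : EuclideanSpace ℂ (Fin m × Fin n) => v (a, b)) hsum
    have h2 : e j a * (α * y b) = e j a * (c j * f j b) := by
      have hxa : x a = α * e j a := congrArg (fun v : EuclideanSpace ℂ (Fin m) => v a) hαx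
      linear_combination h1 - y b * hxa
    have h3 := mul_left_cancel₀ ha h2
    show y b = β * f j b
    calc y b = α⁻¹ * (α * y b) := by field_simp
    _ = α⁻¹ * (c j * f j b) := by rw [h3]
    _ = β * f j b := by rw [hβ]; ring
  have hβnorm : ‖β‖ = 1 := by
    have h := hy
    rw [hβy, norm_smul, hfn j, mul_one] at h
    exact h
  exact ⟨j, α, β, hαnorm, hβnorm, hαx, hβy⟩

lemma tensorVec_smul {m n : ℕ} (α β : ℂ) (x : EuclideanSpace ℂ (Fin m))
    (y : EuclideanSpace ℂ (Fin n)) :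
    tensorVec (α • x) (β • y) = (α * β) • tensorVec x y := by
  ext p
  show (α * x p.1) * (β * y p.2) = (α * β) * (x p.1 * y p.2)
  ring

lemma vecState_smul_unit {ι : Type*} [Fintype ι] {c : ℂ} (hc : ‖c‖ = 1)
    (v : EuclideanSpace ℂ ι) : vecState (c • v) = vecState v := by
  have hcc : c * (starRingEnd ℂ) c = 1 := by
    rw [Complex.mul_conj]
    norm_cast
    rw [Complex.normSq_eq_norm_sq, hc]; norm_num
  ext p q
  show (c • v) p * (starRingEnd ℂ) ((c • v) q) = v p * (starRingEnd ℂ) (v q)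
  have h1 : (c • v) p = c * v p := rfl
  have h2 : (c • v) q = c * v q := rfl
  rw [h1, h2, map_mul]
  calc c * v p * ((starRingEnd ℂ) c * (starRingEnd ℂ) (v q))
      = (c * (starRingEnd ℂ) c) * (v p * (starRingEnd ℂ) (v q)) := by ring
  _ = v p * (starRingEnd ℂ) (v q) := by rw [hcc, one_mul]

/-- Real coefficients in a rank-one decomposition along a linearly independent family
are unique. -/
lemma coeff_eq {ι k : Type*} [Fintype ι] [Fintype k] {v : k → EuclideanSpace ℂ ι}
    (hv : LinearIndependent ℂ v) {a b : k → ℝ}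
    (h : ∑ i, a i • vecState (v i) = ∑ i, b i • vecState (v i)) : a = b := by
  funext i₀
  have entry : ∀ p q, ∑ i, (a i : ℂ) * (v i p * (starRingEnd ℂ) (v i q))
      = ∑ i, (b i : ℂ) * (v i p * (starRingEnd ℂ) (v i q)) := by
    intro p q
    have := congrFun (congrFun h p) q
    rw [Matrix.sum_apply, Matrix.sum_apply] at this
    calc ∑ i, (a i : ℂ) * (v i p * (starRingEnd ℂ) (v i q))
        = ∑ i, (a i • vecState (v i)) p q := by
          apply Finset.sum_congr rfl; intro i _
          rw [Matrix.smul_apply]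
          show _ = a i • (v i p * (starRingEnd ℂ) (v i q))
          rw [Complex.real_smul]
    _ = ∑ i, (b i • vecState (v i)) p q := this
    _ = ∑ i, (b i : ℂ) * (v i p * (starRingEnd ℂ) (v i q)) := by
          apply Finset.sum_congr rfl; intro i _
          rw [Matrix.smul_apply]
          show b i • (v i p * (starRingEnd ℂ) (v i q)) = _
          rw [Complex.real_smul]
  have key : ∀ q, ((a i₀ - b i₀ : ℝ) : ℂ) * (starRingEnd ℂ) (v i₀ q) = 0 := by
    intro q
    have hz : ∑ i, (((a i - b i : ℝ) : ℂ) * (starRingEnd ℂ) (v i q)) • v i = 0 := by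
      ext p
      rw [euc_sum_apply]
      have := entry p q
      push_cast
      show ∑ i, ((a i : ℂ) - (b i : ℂ)) * (starRingEnd ℂ) (v i q) * v i p = (0 : EuclideanSpace ℂ ι) p
      have h0 : (0 : EuclideanSpace ℂ ι) p = 0 := rfl
      rw [h0]
      have : ∑ i, ((a i : ℂ) - (b i : ℂ)) * (starRingEnd ℂ) (v i q) * v i p
          = (∑ i, (a i : ℂ) * (v i p * (starRingEnd ℂ) (v i q)))
            - (∑ i, (b i : ℂ) * (v i p * (starRingEnd ℂ) (v i q))) := by
        rw [← Finset.sum_sub_distrib]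
        apply Finset.sum_congr rfl; intro i _; ring
      rw [this, entry p q, sub_self]
    exact Fintype.linearIndependent_iff.mp hv _ hz i₀
  obtain ⟨q, hq⟩ := euc_ne_zero (hv.ne_zero i₀)
  have := key q
  rcases mul_eq_zero.mp this with h' | h'
  · have : (a i₀ - b i₀ : ℝ) = 0 := by exact_mod_cast h'
    linarith
  · exact absurd h' (by simpa using hq)

lemma quad_vecState {ι : Type*} [Fintype ι] (v u : EuclideanSpace ℂ ι) :
    ∑ p, ∑ q, (starRingEnd ℂ) (u p) * vecState v p q * u q
      = ((Complex.normSq (inner ℂ u v : ℂ) : ℝ) : ℂ) := by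
  have h1 : ∑ p, ∑ q, (starRingEnd ℂ) (u p) * vecState v p q * u q
      = (∑ p, (starRingEnd ℂ) (u p) * v p) * (∑ q, (starRingEnd ℂ) (v q) * u q) := by
    rw [Finset.sum_mul_sum]
    apply Finset.sum_congr rfl; intro p _
    apply Finset.sum_congr rfl; intro q _
    show (starRingEnd ℂ) (u p) * (v p * (starRingEnd ℂ) (v q)) * u q = _
    ring
  have h2 : ∑ q, (starRingEnd ℂ) (v q) * u q = (starRingEnd ℂ) (inner ℂ u v : ℂ) := by
    rw [euc_inner_eq u v, map_sum]
    apply Finset.sum_congr rfl; intro q _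
    rw [map_mul, Complex.conj_conj]
    ring
  rw [h1, h2, ← euc_inner_eq u v, Complex.mul_conj]

lemma quad_sum {ι s : Type*} [Fintype ι] [Fintype s] (g : s → ℝ)
    (vv : s → EuclideanSpace ℂ ι) (u : EuclideanSpace ℂ ι) :
    ∑ p, ∑ q, (starRingEnd ℂ) (u p) * (∑ i, g i • vecState (vv i)) p q * u q
      = ((∑ i, g i * Complex.normSq (inner ℂ u (vv i) : ℂ) : ℝ) : ℂ) := by
  calc ∑ p, ∑ q, (starRingEnd ℂ) (u p) * (∑ i, g i • vecState (vv i)) p q * u q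
      = ∑ p, ∑ q, ∑ i, (g i : ℂ) * ((starRingEnd ℂ) (u p) * vecState (vv i) p q * u q) := by
        apply Finset.sum_congr rfl; intro p _
        apply Finset.sum_congr rfl; intro q _
        rw [Matrix.sum_apply, Finset.mul_sum, Finset.sum_mul]
        apply Finset.sum_congr rfl; intro i _
        rw [Matrix.smul_apply]
        show (starRingEnd ℂ) (u p) * (g i • vecState (vv i) p q) * u q = _
        rw [Complex.real_smul]
        ring
  _ = ∑ p, ∑ i, ∑ q, (g i : ℂ) * ((starRingEnd ℂ) (u p) * vecState (vv i) p q * u q) := by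
        apply Finset.sum_congr rfl; intro p _
        exact Finset.sum_comm
  _ = ∑ i, ∑ p, ∑ q, (g i : ℂ) * ((starRingEnd ℂ) (u p) * vecState (vv i) p q * u q) :=
        Finset.sum_comm
  _ = ∑ i, (g i : ℂ) * (∑ p, ∑ q, (starRingEnd ℂ) (u p) * vecState (vv i) p q * u q) := by
        simp_rw [Finset.mul_sum]
  _ = ((∑ i, g i * Complex.normSq (inner ℂ u (vv i) : ℂ) : ℝ) : ℂ) := by
        push_cast
        apply Finset.sum_congr rfl; intro i _
        rw [quad_vecState]

/-- If two rank-one decompositions agree, terms with nonzero weight on the right lie in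
the span of the vectors on the left. -/
lemma terms_in_span {ι k r : Type*} [Fintype ι] [Fintype k] [Fintype r]
    (lam : k → ℝ) (v : k → EuclideanSpace ℂ ι) (mu : r → ℝ) (w : r → EuclideanSpace ℂ ι)
    (hmu : ∀ j, 0 ≤ mu j)
    (h : ∑ i, lam i • vecState (v i) = ∑ j, mu j • vecState (w j)) :
    ∀ j, mu j ≠ 0 → w j ∈ Submodule.span ℂ (Set.range v) := by
  set W := Submodule.span ℂ (Set.range v) with hW
  haveI : FiniteDimensional ℂ W := FiniteDimensional.span_of_finite ℂ (Set.finite_range v)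
  intro j hj
  rw [← Submodule.orthogonal_orthogonal W]
  rw [Submodule.mem_orthogonal]
  intro u hu
  have hq : ((∑ i, lam i * Complex.normSq (inner ℂ u (v i) : ℂ) : ℝ) : ℂ)
      = ((∑ j', mu j' * Complex.normSq (inner ℂ u (w j') : ℂ) : ℝ) : ℂ) := by
    rw [← quad_sum lam v u, ← quad_sum mu w u, h]
  rw [Complex.ofReal_inj] at hq
  have hL : ∑ i, lam i * Complex.normSq (inner ℂ u (v i) : ℂ) = 0 := by
    apply Finset.sum_eq_zero; intro i _
    have hvW : v i ∈ W := Submodule.subset_span ⟨i, rfl⟩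
    have h0 : (inner ℂ (v i) u : ℂ) = 0 := (Submodule.mem_orthogonal W u).mp hu (v i) hvW
    have h0' : (inner ℂ u (v i) : ℂ) = 0 := by
      rw [← inner_conj_symm, h0, map_zero]
    rw [h0']
    simp
  rw [hL] at hq
  have hterm : mu j * Complex.normSq (inner ℂ u (w j) : ℂ) = 0 := by
    have := (Finset.sum_eq_zero_iff_of_nonneg (fun j' _ =>
      mul_nonneg (hmu j') (Complex.normSq_nonneg _))).mp hq.symm j (Finset.mem_univ j)
    exact this
  rcases mul_eq_zero.mp hterm with h' | h'
  · exact absurd h' hj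
  · exact Complex.normSq_eq_zero.mp h'

/-- Uniqueness of the decomposition of an element of `V_k`. -/
lemma unique_decomp {m n k : ℕ}
    {lam : Fin k → ℝ} {e : Fin k → EuclideanSpace ℂ (Fin m)}
    {f : Fin k → EuclideanSpace ℂ (Fin n)}
    (hlam : ∀ i, 0 < lam i) (he : ∀ i, ‖e i‖ = 1) (hfn : ∀ i, ‖f i‖ = 1)
    (hdist : ∀ i j : Fin k, i ≠ j → Submodule.span ℂ {e i} ≠ Submodule.span ℂ {e j})
    (hf : LinearIndependent ℂ f)
    {mu : Fin k → ℝ} {x : Fin k → EuclideanSpace ℂ (Fin m)}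
    {y : Fin k → EuclideanSpace ℂ (Fin n)}
    (hmu : ∀ j, 0 ≤ mu j) (hx : ∀ j, ‖x j‖ = 1) (hy : ∀ j, ‖y j‖ = 1)
    (heq : ∑ i, lam i • vecState (tensorVec (e i) (f i))
      = ∑ j, mu j • vecState (tensorVec (x j) (y j))) :
    ∃ σ : Fin k → Fin k, Function.Bijective σ ∧ ∀ j, mu j = lam (σ j) ∧
      ∃ α β : ℂ, ‖α‖ = 1 ∧ ‖β‖ = 1 ∧ x j = α • e (σ j) ∧ y j = β • f (σ j) := by
  classical
  set v : Fin k → EuclideanSpace ℂ (Fin m × Fin n) := fun i => tensorVec (e i) (f i) with hv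
  have he0 : ∀ i, e i ≠ 0 := fun i => unit_ne_zero (he i)
  have hvind : LinearIndependent ℂ v := tensor_linearIndependent he0 hf
  -- step A : each term with nonzero weight is a multiple of some `v i`
  have hA : ∀ j, ∃ i, mu j ≠ 0 →
      ∃ α β : ℂ, ‖α‖ = 1 ∧ ‖β‖ = 1 ∧ x j = α • e i ∧ y j = β • f i := by
    intro j
    by_cases hj : mu j ≠ 0
    · have hmem := terms_in_span lam v mu (fun j => tensorVec (x j) (y j)) hmu heq j hj
      obtain ⟨c, hc⟩ := (Submodule.mem_span_range_iff_exists_fun ℂ).mp hmem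
      obtain ⟨i, α, β, h1, h2, h3, h4⟩ :=
        product_in_span he hfn hdist hf (hx j) (hy j) c hc
      exact ⟨i, fun _ => ⟨α, β, h1, h2, h3, h4⟩⟩
    · exact ⟨j, fun h => absurd h (by simpa using hj)⟩
  choose σ hσ using hA
  -- step B : rewrite each term
  have hstate : ∀ j, mu j • vecState (tensorVec (x j) (y j)) = mu j • vecState (v (σ j)) := by
    intro j
    by_cases hj : mu j ≠ 0
    · obtain ⟨α, β, hα, hβ, hxj, hyj⟩ := hσ j hj
      rw [hxj, hyj, tensorVec_smul, vecState_smul_unit (by rw [norm_mul, hα, hβ, mul_one])]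
    · push_neg at hj
      rw [hj, zero_smul, zero_smul]
  -- step C
  have heq2 : ∑ i, lam i • vecState (v i) = ∑ j, mu j • vecState (v (σ j)) := by
    rw [heq]
    exact Finset.sum_congr rfl fun j _ => hstate j
  -- step D : group the fibers of σ
  have hD : ∑ j, mu j • vecState (v (σ j))
      = ∑ i, (∑ j ∈ Finset.univ.filter (fun j => σ j = i), mu j) • vecState (v i) := by
    rw [← Finset.sum_fiberwise_of_maps_to (fun j _ => Finset.mem_univ (σ j))
      (fun j => mu j • vecState (v (σ j)))]
    apply Finset.sum_congr rfl; intro i _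
    rw [Finset.sum_smul]
    apply Finset.sum_congr rfl; intro j hj
    rw [(Finset.mem_filter.mp hj).2]
  -- step E : coefficients agree
  have hE : ∀ i, lam i = ∑ j ∈ Finset.univ.filter (fun j => σ j = i), mu j := by
    have := coeff_eq hvind (heq2.trans hD)
    exact fun i => congrFun this i
  -- step F : σ is surjective, hence bijective
  have hsurj : Function.Surjective σ := by
    intro i
    by_contra hns
    push_neg at hns
    have : ∑ j ∈ Finset.univ.filter (fun j => σ j = i), mu j = 0 :=
      Finset.sum_eq_zero fun j hj => absurd (Finset.mem_filter.mp hj).2 (hns j)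
    exact absurd (hE i) (by rw [this]; exact (hlam i).ne')
  have hinj : Function.Injective σ := Finite.injective_iff_surjective.mpr hsurj
  -- step G : mu j = lam (σ j)
  have hG : ∀ j, mu j = lam (σ j) := by
    intro j
    rw [hE (σ j)]
    have hfil : Finset.univ.filter (fun j' => σ j' = σ j) = {j} := by
      ext j'
      simp [hinj.eq_iff]
    rw [hfil, Finset.sum_singleton]
  refine ⟨σ, ⟨hinj, hsurj⟩, fun j => ⟨hG j, hσ j ?_⟩⟩
  rw [hG j]
  exact (hlam (σ j)).ne'

lemma dite_sum {M : Type*} [AddCommMonoid M] {r k : ℕ} (hrk : r ≤ k) (g : Fin r → M) :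
    (∑ j : Fin k, if h : (j : ℕ) < r then g ⟨j, h⟩ else 0) = ∑ i, g i := by
  set F : ℕ → M := fun j => if h : j < r then g ⟨j, h⟩ else 0 with hF
  have h1 : (∑ j : Fin k, if h : (j : ℕ) < r then g ⟨j, h⟩ else 0) = ∑ j ∈ Finset.range k, F j := by
    rw [← Fin.sum_univ_eq_sum_range F k]
  have h2 : ∑ j ∈ Finset.range r, F j = ∑ j ∈ Finset.range k, F j := by
    apply Finset.sum_subset (Finset.range_subset_range.mpr hrk)
    intro j _ hj
    rw [Finset.mem_range, not_lt] at hj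
    rw [hF]
    simp only [dif_neg (not_lt.mpr hj)]
  rw [h1, ← h2, ← Fin.sum_univ_eq_sum_range F r]
  apply Finset.sum_congr rfl
  intro i _
  rw [hF]
  simp only [dif_pos i.isLt, Fin.eta]

/-- Padding a decomposition with zero weights. -/
lemma hasDecomp_mono {m n r k : ℕ} (hm : 0 < m) (hn : 0 < n) (hrk : r ≤ k)
    {ω : Matrix (Fin m × Fin n) (Fin m × Fin n) ℂ} (h : HasDecompOfSize m n r ω) :
    HasDecompOfSize m n k ω := by
  obtain ⟨lam, x, y, hnn, hsum, hnx, hny, heq⟩ := h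
  let x₀ : EuclideanSpace ℂ (Fin m) := EuclideanSpace.single ⟨0, hm⟩ 1
  let y₀ : EuclideanSpace ℂ (Fin n) := EuclideanSpace.single ⟨0, hn⟩ 1
  have hx₀ : ‖x₀‖ = 1 := by rw [EuclideanSpace.norm_single]; norm_num
  have hy₀ : ‖y₀‖ = 1 := by rw [EuclideanSpace.norm_single]; norm_num
  refine ⟨fun j => if h : (j : ℕ) < r then lam ⟨j, h⟩ else 0,
    fun j => if h : (j : ℕ) < r then x ⟨j, h⟩ else x₀,
    fun j => if h : (j : ℕ) < r then y ⟨j, h⟩ else y₀, ?_, ?_, ?_, ?_, ?_⟩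
  · intro j
    by_cases h : (j : ℕ) < r
    · simp only [dif_pos h]; exact hnn _
    · simp only [dif_neg h]; exact le_refl 0
  · rw [dite_sum hrk lam]; exact hsum
  · intro j
    by_cases h : (j : ℕ) < r
    · simp only [dif_pos h]; exact hnx _
    · simp only [dif_neg h]; exact hx₀
  · intro j
    by_cases h : (j : ℕ) < r
    · simp only [dif_pos h]; exact hny _
    · simp only [dif_neg h]; exact hy₀
  · rw [heq, ← dite_sum hrk (fun i => lam i • vecState (tensorVec (x i) (y i)))]
    apply Finset.sum_congr rfl
    intro j _
    by_cases h : (j : ℕ) < r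
    · simp only [dif_pos h]
    · simp only [dif_neg h, zero_smul]

lemma span_eq_of_unit_smul {E : Type*} [NormedAddCommGroup E] [InnerProductSpace ℂ E]
    {x e : E} {α : ℂ} (hα : ‖α‖ = 1) (hx : x = α • e) :
    Submodule.span ℂ {x} = Submodule.span ℂ {e} := by
  rw [hx]
  exact Submodule.span_singleton_smul_eq (IsUnit.mk0 α (by intro h; rw [h] at hα; simp at hα)) e

lemma norm_inner_lt_one_of_span_ne {E : Type*} [NormedAddCommGroup E]
    [InnerProductSpace ℂ E] {x y : E} (hx : ‖x‖ = 1) (hy : ‖y‖ = 1)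
    (hspan : Submodule.span ℂ {x} ≠ Submodule.span ℂ {y}) :
    ‖(inner ℂ x y : ℂ)‖ < 1 := by
  have hx0 := unit_ne_zero' hx
  have hy0 := unit_ne_zero' hy
  have hle : ‖(inner ℂ x y : ℂ)‖ ≤ 1 := by
    have := norm_inner_le_norm (𝕜 := ℂ) x y
    rwa [hx, hy, mul_one] at this
  rcases hle.lt_or_eq with h | h
  · exact h
  · exfalso
    have : ‖(inner ℂ x y : ℂ)‖ = ‖x‖ * ‖y‖ := by rw [hx, hy, mul_one]; exact h
    obtain ⟨r, hr0, hr⟩ := (norm_inner_eq_norm_iff hx0 hy0).mp this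
    have hrnorm : ‖r‖ = 1 := by
      have := hy
      rw [hr, norm_smul, hx, mul_one] at this
      exact this
    exact hspan (span_eq_of_unit_smul hrnorm hr).symm

lemma span_ne_of_norm_inner_lt_one {E : Type*} [NormedAddCommGroup E]
    [InnerProductSpace ℂ E] {x y : E} (hx : ‖x‖ = 1) (hy : ‖y‖ = 1)
    (hlt : ‖(inner ℂ x y : ℂ)‖ < 1) :
    Submodule.span ℂ {x} ≠ Submodule.span ℂ {y} := by
  intro hsp
  have hx0 := unit_ne_zero' hx
  have hmem : x ∈ Submodule.span ℂ {y} := by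
    rw [← hsp]
    exact Submodule.mem_span_singleton_self x
  obtain ⟨c, hc⟩ := Submodule.mem_span_singleton.mp hmem
  have hcnorm : ‖c‖ = 1 := by
    have := hx
    rw [← hc, norm_smul, hy, mul_one] at this
    exact this
  have : (inner ℂ x y : ℂ) = (starRingEnd ℂ) c := by
    rw [← hc, inner_smul_left]
    have : (inner ℂ y y : ℂ) = 1 := by
      rw [inner_self_eq_norm_sq_to_K, hy]
      norm_num
    rw [this, mul_one]
  rw [this] at hlt
  rw [RCLike.norm_conj, hcnorm] at hlt
  exact lt_irrefl 1 hlt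

open Filter Topology in
lemma continuous_mix {m n k : ℕ} :
    Continuous (fun p : (Fin k → ℝ) × (Fin k → EuclideanSpace ℂ (Fin m)) ×
        (Fin k → EuclideanSpace ℂ (Fin n)) =>
      ∑ j, p.1 j • vecState (tensorVec (p.2.1 j) (p.2.2 j))) := by
  apply continuous_finset_sum
  intro j _
  apply Continuous.fun_smul
  · exact (continuous_apply j).comp continuous_fst
  · apply continuous_matrix
    intro a b
    have hx : ∀ i : Fin m, Continuous fun p : (Fin k → ℝ) × (Fin k → EuclideanSpace ℂ (Fin m)) ×
        (Fin k → EuclideanSpace ℂ (Fin n)) => p.2.1 j i :=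
      fun i => ((continuous_apply i).comp (PiLp.continuous_ofLp (p := 2) (β := fun _ : Fin m => ℂ))).comp ((continuous_apply j).comp
        (continuous_fst.comp continuous_snd))
    have hy : ∀ i : Fin n, Continuous fun p : (Fin k → ℝ) × (Fin k → EuclideanSpace ℂ (Fin m)) ×
        (Fin k → EuclideanSpace ℂ (Fin n)) => p.2.2 j i :=
      fun i => ((continuous_apply i).comp (PiLp.continuous_ofLp (p := 2) (β := fun _ : Fin n => ℂ))).comp ((continuous_apply j).comp
        (continuous_snd.comp continuous_snd))
    show Continuous fun p : (Fin k → ℝ) × (Fin k → EuclideanSpace ℂ (Fin m)) ×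
        (Fin k → EuclideanSpace ℂ (Fin n)) =>
      (p.2.1 j a.1 * p.2.2 j a.2) * (starRingEnd ℂ) (p.2.1 j b.1 * p.2.2 j b.2)
    exact ((hx a.1).mul (hy a.2)).mul (RCLike.continuous_conj.comp ((hx b.1).mul (hy b.2)))
end VsetAux

attribute [local instance] Matrix.normedAddCommGroup


attribute [local instance] Matrix.normedAddCommGroup

set_option maxHeartbeats 2000000 in
open Filter Topology VsetAux in
/-- For `m, n > 1` and `k ≤ max(m,n)`, the set `V_k` is open in `S_k` (the set of
separable states of length at most `k`) for the subspace topology induced by the norm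
topology on matrices. -/
theorem Vset_open_in_lengthLeSet {m n k : ℕ}
    (hm : 1 < m) (hn : 1 < n) (hk : k ≤ max m n) :
    IsOpen (Subtype.val ⁻¹' Vset m n k : Set (lengthLeSet m n k)) := by
  classical
  rw [← isClosed_compl_iff]
  haveI : FirstCountableTopology (Matrix (Fin m × Fin n) (Fin m × Fin n) ℂ) :=
    inferInstanceAs (FirstCountableTopology (Fin m × Fin n → Fin m × Fin n → ℂ))
  apply IsSeqClosed.isClosed
  intro g L hg hgL
  simp only [Set.mem_compl_iff, Set.mem_preimage] at hg ⊢
  intro hL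
  obtain ⟨lam, e, f, hlam, hlsum, he, hfn, hdist, hf, hLdec⟩ := hL
  -- decompositions of each `g t`, padded to length `k`
  have hdec : ∀ t, HasDecompOfSize m n k ((g t : Matrix (Fin m × Fin n) (Fin m × Fin n) ℂ)) := by
    intro t
    obtain ⟨r, hrk, hr⟩ := (g t).2
    exact hasDecomp_mono (by omega) (by omega) hrk hr
  choose μ x y hnn hsum hnx hny heqd using hdec
  -- compactness of the parameter space
  have hKc : IsCompact (stdSimplex ℝ (Fin k) ×ˢ
      ((Set.univ.pi fun _ : Fin k => Metric.sphere (0 : EuclideanSpace ℂ (Fin m)) 1) ×ˢ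
       (Set.univ.pi fun _ : Fin k => Metric.sphere (0 : EuclideanSpace ℂ (Fin n)) 1))) :=
    (isCompact_stdSimplex ℝ _).prod
      ((isCompact_univ_pi fun _ => isCompact_sphere _ _).prod
       (isCompact_univ_pi fun _ => isCompact_sphere _ _))
  have hpK : ∀ t, (μ t, (x t, y t)) ∈ stdSimplex ℝ (Fin k) ×ˢ
      ((Set.univ.pi fun _ : Fin k => Metric.sphere (0 : EuclideanSpace ℂ (Fin m)) 1) ×ˢ
       (Set.univ.pi fun _ : Fin k => Metric.sphere (0 : EuclideanSpace ℂ (Fin n)) 1)) := by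
    intro t
    refine ⟨⟨hnn t, hsum t⟩, ⟨fun j _ => ?_, fun j _ => ?_⟩⟩
    · exact mem_sphere_zero_iff_norm.mpr (hnx t j)
    · exact mem_sphere_zero_iff_norm.mpr (hny t j)
  obtain ⟨a, haK, φ, hφ, hconv⟩ := hKc.tendsto_subseq hpK
  obtain ⟨lamL, xL, yL⟩ := a
  -- component limits
  have h1 : Tendsto (fun t => μ (φ t)) atTop (𝓝 lamL) :=
    (continuous_fst.tendsto _).comp hconv
  have h2 : Tendsto (fun t => x (φ t)) atTop (𝓝 xL) :=
    ((continuous_fst.comp continuous_snd).tendsto _).comp hconv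
  have h3 : Tendsto (fun t => y (φ t)) atTop (𝓝 yL) :=
    ((continuous_snd.comp continuous_snd).tendsto _).comp hconv
  -- the limit satisfies the limit decomposition
  have hlim1 : Tendsto (fun t => ((g (φ t) : Matrix (Fin m × Fin n) (Fin m × Fin n) ℂ)))
      atTop (𝓝 (L : Matrix (Fin m × Fin n) (Fin m × Fin n) ℂ)) :=
    (continuous_subtype_val.tendsto L).comp (hgL.comp hφ.tendsto_atTop)
  have hlim2 : Tendsto (fun t => ∑ j, μ (φ t) j • vecState (tensorVec (x (φ t) j) (y (φ t) j)))
      atTop (𝓝 (∑ j, lamL j • vecState (tensorVec (xL j) (yL j)))) :=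
    (continuous_mix.tendsto _).comp hconv
  have hLeq : (L : Matrix (Fin m × Fin n) (Fin m × Fin n) ℂ)
      = ∑ j, lamL j • vecState (tensorVec (xL j) (yL j)) := by
    refine tendsto_nhds_unique ?_ hlim2
    convert hlim1 using 2 with t
    exact (heqd (φ t)).symm
  -- limit data properties
  have hLnn : ∀ j, 0 ≤ lamL j := haK.1.1
  have hnxL : ∀ j, ‖xL j‖ = 1 := fun j => mem_sphere_zero_iff_norm.mp (haK.2.1 j (Set.mem_univ j))
  have hnyL : ∀ j, ‖yL j‖ = 1 := fun j => mem_sphere_zero_iff_norm.mp (haK.2.2 j (Set.mem_univ j))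
  -- uniqueness of the decomposition
  obtain ⟨σ, hσbij, hσ⟩ := unique_decomp hlam he hfn hdist hf hLnn hnxL hnyL
    (hLdec.symm.trans hLeq)
  choose αc βc hαc hβc hxLe hyLf using fun j => (hσ j).2
  -- eventual positivity of the weights
  have E1 : ∀ᶠ t in atTop, ∀ j, 0 < μ (φ t) j := by
    rw [eventually_all]
    intro j
    have hj : Tendsto (fun t => μ (φ t) j) atTop (𝓝 (lamL j)) :=
      ((continuous_apply j).tendsto _).comp h1
    have hpos : 0 < lamL j := by rw [(hσ j).1]; exact hlam (σ j)
    exact hj.eventually_const_lt hpos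
  -- eventual distinctness of the lines
  have E2 : ∀ᶠ t in atTop, ∀ pr : Fin k × Fin k, pr.1 ≠ pr.2 →
      ‖(inner ℂ (x (φ t) pr.1) (x (φ t) pr.2) : ℂ)‖ < 1 := by
    rw [eventually_all]
    rintro ⟨i, j⟩
    dsimp only
    by_cases hij : i = j
    · exact Eventually.of_forall fun t h => absurd hij h
    · have hxi : Tendsto (fun t => x (φ t) i) atTop (𝓝 (xL i)) :=
        ((continuous_apply i).tendsto _).comp h2
      have hxj : Tendsto (fun t => x (φ t) j) atTop (𝓝 (xL j)) :=
        ((continuous_apply j).tendsto _).comp h2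
      have htin : Tendsto (fun t => ‖(inner ℂ (x (φ t) i) (x (φ t) j) : ℂ)‖) atTop
          (𝓝 ‖(inner ℂ (xL i) (xL j) : ℂ)‖) := (hxi.inner hxj).norm
      have hlt : ‖(inner ℂ (xL i) (xL j) : ℂ)‖ < 1 := by
        apply norm_inner_lt_one_of_span_ne (hnxL i) (hnxL j)
        rw [span_eq_of_unit_smul (hαc i) (hxLe i), span_eq_of_unit_smul (hαc j) (hxLe j)]
        exact hdist _ _ fun hc => hij (hσbij.1 hc)
      exact (htin.eventually_lt_const hlt).mono fun t ht _ => ht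
  -- eventual linear independence
  have hyLind : LinearIndependent ℂ yL := by
    have hcomp : LinearIndependent ℂ (f ∘ σ) := hf.comp σ hσbij.1
    have := hcomp.units_smul fun j => Units.mk0 (βc j)
      (fun h0 => by have hb := hβc j; rw [h0] at hb; simp at hb)
    convert this using 1
    funext j
    rw [hyLf j]
    rfl
  have E3 : ∀ᶠ t in atTop, LinearIndependent ℂ (y (φ t)) :=
    h3.eventually (eventually_of_mem
      (isOpen_setOf_linearIndependent.mem_nhds hyLind) fun z hz => hz)
  obtain ⟨t, ht1, ht2, ht3⟩ := (E1.and (E2.and E3)).exists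
  apply hg (φ t)
  refine ⟨μ (φ t), x (φ t), y (φ t), ht1, hsum (φ t), hnx (φ t), hny (φ t), ?_, ht3, heqd (φ t)⟩
  intro i j hij
  exact span_ne_of_norm_inner_lt_one (hnx (φ t) i) (hnx (φ t) j) (ht2 (i, j) hij)
end
end
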